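/- Let ξ: G → B be a surjective quasifibration with total error Δ_ξ. Then there exists a graph G' compatible with G (same node set, common arcs with same endpoints) and a surjective fibration ξ': G' → B agreeing with ξ on all nodes and on all common arcs, such that the symmetric difference of arc sets |A_G Δ A_{G'}| equals Δ_ξ; moreover, for any other compatible graph G'' with a fibration ξ'': G'' → B agreeing with ξ on nodes and common arcs, |A_G Δ A_{G''}| ≥ Δ_ξ. -/

import Mathlib

/-- A directed multigraph: node set `N`, arc set `A`, source and target maps. -/
structure Multigraph (N A : Type) where
  s : A → N
  t : A → N

/-- A homomorphism of directed multigraphs: maps on nodes and arcs commuting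
with source and target. -/
structure GraphHom {N A N' A' : Type} (G : Multigraph N A) (B : Multigraph N' A') where
  nodeMap : N → N'
  arcMap : A → A'
  map_s : ∀ a, B.s (arcMap a) = nodeMap (G.s a)
  map_t : ∀ a, B.t (arcMap a) = nodeMap (G.t a)

/-- A fibration: every arc of the base lifts uniquely at every node in the
fibre of its target. -/
def IsFibration {N A N' A' : Type} {G : Multigraph N A} {B : Multigraph N' A'}
    (φ : GraphHom G B) : Prop :=
  ∀ (a : A') (x : N), φ.nodeMap x = B.t a →
    ∃! a' : A, φ.arcMap a' = a ∧ G.t a' = x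

open Classical in
/-- The total error `Δ_ξ = Σ_{a,y} |δ_ξ(a,y)|` of a graph homomorphism `ξ`,
where `δ_ξ(a,y)` is the number of liftings of the arc `a` at the node `y`
(for `y` in the fibre of the target of `a`) minus one. -/
noncomputable def totalError {N A N' A' : Type} [Fintype N] [Fintype A']
    (G : Multigraph N A) (B : Multigraph N' A') (ξ : GraphHom G B) : ℤ :=
  ∑ a : A', ∑ y : N,
    if ξ.nodeMap y = B.t a then
      |(Nat.card {a' : A // ξ.arcMap a' = a ∧ G.t a' = y} : ℤ) - 1|
    else 0

/-- Ambient universe of potential arcs for graphs compatible with `G` (same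
node set `N`): the arcs of `G` together with fresh arcs `(a, x, y, i)` with
prescribed image `a` in the base, source `x`, target `y` and multiplicity
index `i`. -/
def AmbArc (A A' N : Type) : Type := A ⊕ (A' × N × N × ℕ)

/-- Source of an ambient arc. -/
def ambS {N A A' : Type} (G : Multigraph N A) : AmbArc A A' N → N
  | .inl a => G.s a
  | .inr (_, x, _, _) => x

/-- Target of an ambient arc. -/
def ambT {N A A' : Type} (G : Multigraph N A) : AmbArc A A' N → N
  | .inl a => G.t a
  | .inr (_, _, y, _) => y

/-- Canonical image in the base of an ambient arc. -/
def ambMap {N A N' A' : Type} {G : Multigraph N A} {B : Multigraph N' A'}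
    (ξ : GraphHom G B) : AmbArc A A' N → A'
  | .inl a => ξ.arcMap a
  | .inr (a, _, _, _) => a

open Classical in
/-- Auxiliary: a chosen lift of the arc `p.1` at the node `p.2`, if any. -/
noncomputable def ffn {N A N' A' : Type} {G : Multigraph N A} {B : Multigraph N' A'}
    (ξ : GraphHom G B) (p : A' × N) : Option A :=
  if h : ∃ a' : A, ξ.arcMap a' = p.1 ∧ G.t a' = p.2 then some h.choose else none

theorem ffn_pos {N A N' A' : Type} {G : Multigraph N A} {B : Multigraph N' A'}
    (ξ : GraphHom G B) {p : A' × N}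
    (h : ∃ a' : A, ξ.arcMap a' = p.1 ∧ G.t a' = p.2) :
    ffn ξ p = some h.choose := dif_pos h

theorem ffn_eq_none_iff {N A N' A' : Type} {G : Multigraph N A} {B : Multigraph N' A'}
    (ξ : GraphHom G B) (p : A' × N) :
    ffn ξ p = none ↔ ¬ ∃ a' : A, ξ.arcMap a' = p.1 ∧ G.t a' = p.2 := by
  unfold ffn
  split <;> simp [*]

theorem ffn_some_spec {N A N' A' : Type} {G : Multigraph N A} {B : Multigraph N' A'}
    (ξ : GraphHom G B) {p : A' × N} {c : A} (h : ffn ξ p = some c) :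
    ξ.arcMap c = p.1 ∧ G.t c = p.2 := by
  by_cases hex : ∃ a' : A, ξ.arcMap a' = p.1 ∧ G.t a' = p.2
  · rw [ffn_pos ξ hex] at h
    injection h with h'
    exact h' ▸ hex.choose_spec
  · rw [(ffn_eq_none_iff ξ p).mpr hex] at h
    exact absurd h (by simp)

open Classical in
/-- Auxiliary: number of lifts of the arc `p.1` at the node `p.2`. -/
noncomputable def kkn {N A N' A' : Type} [Fintype A] {G : Multigraph N A}
    {B : Multigraph N' A'} (ξ : GraphHom G B) (p : A' × N) : ℕ :=
  (Finset.univ.filter (fun a' : A => ξ.arcMap a' = p.1 ∧ G.t a' = p.2)).card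

open Classical in
theorem kkn_eq_zero_iff {N A N' A' : Type} [Fintype A] {G : Multigraph N A}
    {B : Multigraph N' A'} (ξ : GraphHom G B) (p : A' × N) :
    kkn ξ p = 0 ↔ ffn ξ p = none := by
  rw [ffn_eq_none_iff]
  unfold kkn
  rw [Finset.card_eq_zero, Finset.filter_eq_empty_iff]
  simp

open Classical in
theorem kkn_eq_natCard {N A N' A' : Type} [Fintype A] {G : Multigraph N A}
    {B : Multigraph N' A'} (ξ : GraphHom G B) (p : A' × N) :
    Nat.card {a' : A // ξ.arcMap a' = p.1 ∧ G.t a' = p.2} = kkn ξ p := by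
  rw [Nat.card_eq_fintype_card, Fintype.card_subtype]
  unfold kkn
  congr 1

/-- Auxiliary: the repaired arc set. -/
def Sgood {N A N' A' : Type} {G : Multigraph N A} {B : Multigraph N' A'}
    (ξ : GraphHom G B) (xs : A' → N) : Set (AmbArc A A' N) :=
  {u | match u with
       | .inl a' => ffn ξ (ξ.arcMap a', G.t a') = some a'
       | .inr (a, x, y, i) => x = xs a ∧ i = 0 ∧ ξ.nodeMap y = B.t a ∧ ffn ξ (a, y) = none}

theorem mem_Sgood_inl {N A N' A' : Type} {G : Multigraph N A} {B : Multigraph N' A'}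
    (ξ : GraphHom G B) (xs : A' → N) (a' : A) :
    (Sum.inl a' : AmbArc A A' N) ∈ Sgood ξ xs ↔
      ffn ξ (ξ.arcMap a', G.t a') = some a' := Iff.rfl

theorem mem_Sgood_inr {N A N' A' : Type} {G : Multigraph N A} {B : Multigraph N' A'}
    (ξ : GraphHom G B) (xs : A' → N) (a : A') (x y : N) (i : ℕ) :
    (Sum.inr (a, x, y, i) : AmbArc A A' N) ∈ Sgood ξ xs ↔
      (x = xs a ∧ i = 0 ∧ ξ.nodeMap y = B.t a ∧ ffn ξ (a, y) = none) := Iff.rfl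

theorem abs_cast_sub_one (k : ℕ) :
    |(k : ℤ) - 1| = (((k - 1) + if k = 0 then 1 else 0 : ℕ) : ℤ) := by
  cases k with
  | zero => simp
  | succ n =>
      have h : ((n + 1 : ℕ) : ℤ) - 1 = (n : ℤ) := by push_cast; ring
      rw [h, if_neg (Nat.succ_ne_zero n), abs_of_nonneg (Int.natCast_nonneg n),
        Nat.succ_sub_one, Nat.add_zero]

/-- Repairing a quasifibration into a fibration ({\scshape GraphRepair}):
given a surjective quasifibration `ξ : G → B`, there is a graph `G'`
(an arc set `S'` in the ambient universe, so `G'` is compatible with `G`)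
and a surjective fibration `ξ' : G' → B` agreeing with `ξ` on nodes and on
common arcs, such that the symmetric difference of the arc sets of `G` and
`G'` has exactly `Δ_ξ` elements; moreover every compatible graph `G''` with a
fibration `ξ'' : G'' → B` agreeing with `ξ` on nodes and common arcs differs
from `G` by at least `Δ_ξ` arcs. -/
theorem graphRepair {N A N' A' : Type}
    [Fintype N] [Fintype A] [Fintype N'] [Fintype A']
    (G : Multigraph N A) (B : Multigraph N' A') (ξ : GraphHom G B)
    (hsurjN : Function.Surjective ξ.nodeMap)
    (hsurjA : Function.Surjective ξ.arcMap) :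
    ∃ S' : Set (AmbArc A A' N), S'.Finite ∧
      -- `ξ'` (given on arcs by `ambMap ξ`, which agrees with `ξ` on common arcs)
      -- is a graph homomorphism from `G' = (N, S')` to `B`:
      (∀ u ∈ S', B.s (ambMap ξ u) = ξ.nodeMap (ambS G u) ∧
                 B.t (ambMap ξ u) = ξ.nodeMap (ambT G u)) ∧
      -- `ξ'` is a fibration:
      (∀ (a : A') (y : N), ξ.nodeMap y = B.t a →
        ∃! u : AmbArc A A' N, u ∈ S' ∧ ambMap ξ u = a ∧ ambT G u = y) ∧
      -- `ξ'` is surjective on arcs (it is surjective on nodes since its node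
      -- component is `ξ.nodeMap`):
      (∀ a : A', ∃ u ∈ S', ambMap ξ u = a) ∧
      -- minimal change: `|A_G Δ A_{G'}| = Δ_ξ`:
      ((((Set.range (Sum.inl : A → AmbArc A A' N)) \ S') ∪
        (S' \ Set.range (Sum.inl : A → AmbArc A A' N))).ncard
          = (totalError G B ξ).toNat) ∧
      -- optimality: any other repair changes at least `Δ_ξ` arcs:
      (∀ (S'' : Set (AmbArc A A' N)), S''.Finite →
        ∀ ζ : AmbArc A A' N → A',
          (∀ a : A, Sum.inl a ∈ S'' → ζ (Sum.inl a) = ξ.arcMap a) →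
          (∀ u ∈ S'', B.s (ζ u) = ξ.nodeMap (ambS G u) ∧
                      B.t (ζ u) = ξ.nodeMap (ambT G u)) →
          (∀ (a : A') (y : N), ξ.nodeMap y = B.t a →
            ∃! u : AmbArc A A' N, u ∈ S'' ∧ ζ u = a ∧ ambT G u = y) →
          (totalError G B ξ).toNat ≤
            (((Set.range (Sum.inl : A → AmbArc A A' N)) \ S'') ∪
             (S'' \ Set.range (Sum.inl : A → AmbArc A A' N))).ncard) := by
  classical
  set T : Finset (A' × N) :=
    Finset.univ.filter (fun p : A' × N => ξ.nodeMap p.2 = B.t p.1) with hT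
  set xs : A' → N := fun a => Classical.choose (hsurjN (B.s a)) with hxsdef
  have hxs : ∀ a : A', ξ.nodeMap (xs a) = B.s a :=
    fun a => Classical.choose_spec (hsurjN (B.s a))
  -- the value of the total error as a natural number
  have hval : totalError G B ξ =
      ((∑ p ∈ T, ((kkn ξ p - 1) + if kkn ξ p = 0 then 1 else 0) : ℕ) : ℤ) := by
    have h0 : totalError G B ξ = ∑ p : A' × N,
        (if ξ.nodeMap p.2 = B.t p.1 then
          |(Nat.card {a' : A // ξ.arcMap a' = p.1 ∧ G.t a' = p.2} : ℤ) - 1| else 0) :=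
      (Fintype.sum_prod_type (fun p : A' × N =>
        if ξ.nodeMap p.2 = B.t p.1 then
          |(Nat.card {a' : A // ξ.arcMap a' = p.1 ∧ G.t a' = p.2} : ℤ) - 1| else 0)).symm
    rw [h0, Nat.cast_sum, hT, Finset.sum_filter]
    apply Finset.sum_congr rfl
    intro p _
    by_cases hc : ξ.nodeMap p.2 = B.t p.1
    · rw [if_pos hc, if_pos hc, kkn_eq_natCard ξ p, abs_cast_sub_one]
    · rw [if_neg hc, if_neg hc]
  have hmemT : ∀ a' : A, (ξ.arcMap a', G.t a') ∈ T := fun a' =>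
    Finset.mem_filter.mpr ⟨Finset.mem_univ _, (ξ.map_t a').symm⟩
  refine ⟨Sgood ξ xs, ?_, ?_, ?_, ?_, ?_, ?_⟩
  -- finiteness
  · apply Set.Finite.subset
      (((Set.finite_range (Sum.inl : A → AmbArc A A' N))).union
        (Set.finite_range (fun p : A' × N => (Sum.inr (p.1, xs p.1, p.2, 0) : AmbArc A A' N))))
    rintro (a' | ⟨a, x, y, i⟩) hu
    · exact Or.inl ⟨a', rfl⟩
    · obtain ⟨hx, hi, -, -⟩ := (mem_Sgood_inr ξ xs a x y i).mp hu
      subst hx; subst hi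
      exact Or.inr ⟨(a, y), rfl⟩
  -- homomorphism
  · rintro (a' | ⟨a, x, y, i⟩) hu
    · exact ⟨ξ.map_s a', ξ.map_t a'⟩
    · obtain ⟨hx, hi, hy, -⟩ := (mem_Sgood_inr ξ xs a x y i).mp hu
      subst hx
      exact ⟨(hxs a).symm, hy.symm⟩
  -- fibration
  · intro a y hy
    by_cases hex : ∃ a' : A, ξ.arcMap a' = a ∧ G.t a' = y
    · have hfe : ffn ξ (a, y) = some hex.choose := ffn_pos ξ hex
      have hcp : ξ.arcMap hex.choose = a ∧ G.t hex.choose = y := hex.choose_spec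
      refine ⟨Sum.inl hex.choose, ⟨?_, hcp.1, hcp.2⟩, ?_⟩
      · apply (mem_Sgood_inl ξ xs _).mpr; rw [hcp.1, hcp.2]; exact hfe
      · rintro (a' | ⟨a0, x0, y0, i0⟩) ⟨huS, hum, hut⟩
        · replace huS := (mem_Sgood_inl ξ xs a').mp huS
          have hum' : ξ.arcMap a' = a := hum
          have hut' : G.t a' = y := hut
          rw [hum', hut', hfe] at huS
          injection huS with h
          rw [h]
        · obtain ⟨-, -, -, hnone⟩ := (mem_Sgood_inr ξ xs a0 x0 y0 i0).mp huS
          have hum' : a0 = a := hum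
          have hut' : y0 = y := hut
          rw [hum', hut', hfe] at hnone
          exact absurd hnone (by simp)
    · have hfn : ffn ξ (a, y) = none := (ffn_eq_none_iff ξ (a, y)).mpr hex
      refine ⟨Sum.inr (a, xs a, y, 0), ⟨?_, rfl, rfl⟩, ?_⟩
      · exact (mem_Sgood_inr ξ xs a (xs a) y 0).mpr ⟨rfl, rfl, hy, hfn⟩
      · rintro (a' | ⟨a0, x0, y0, i0⟩) ⟨huS, hum, hut⟩
        · exact absurd ⟨a', hum, hut⟩ hex
        · obtain ⟨hx, hi, -, -⟩ := (mem_Sgood_inr ξ xs a0 x0 y0 i0).mp huS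
          have hum' : a0 = a := hum
          have hut' : y0 = y := hut
          subst hum'; subst hut'; subst hx; subst hi
          rfl
  -- surjectivity on arcs
  · intro a
    obtain ⟨a', ha'⟩ := hsurjA a
    have hex : ∃ c : A, ξ.arcMap c = a ∧ G.t c = G.t a' := ⟨a', ha', rfl⟩
    have hfe : ffn ξ (a, G.t a') = some hex.choose := ffn_pos ξ hex
    have hcp := hex.choose_spec
    refine ⟨Sum.inl hex.choose, ?_, hcp.1⟩
    apply (mem_Sgood_inl ξ xs _).mpr
    rw [hcp.1, hcp.2]
    exact hfe
  -- cardinality of the symmetric difference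
  · set R : Finset A :=
      Finset.univ.filter (fun a' : A => ¬ ffn ξ (ξ.arcMap a', G.t a') = some a') with hR
    set P : Finset (A' × N) := T.filter (fun p => ffn ξ p = none) with hP
    have hcardR : R.card = ∑ p ∈ T, (kkn ξ p - 1) := by
      rw [Finset.card_eq_sum_card_fiberwise
        (f := fun a' : A => (ξ.arcMap a', G.t a')) (t := T) (fun a' _ => hmemT a')]
      apply Finset.sum_congr rfl
      intro p _
      rcases hf : ffn ξ p with _ | c
      · have hk0 : kkn ξ p = 0 := (kkn_eq_zero_iff ξ p).mpr hf
        rw [hk0]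
        have : R.filter (fun a' => (ξ.arcMap a', G.t a') = p) = ∅ := by
          rw [Finset.filter_eq_empty_iff]
          intro a' _
          intro hcl
          have hex : ∃ b : A, ξ.arcMap b = p.1 ∧ G.t b = p.2 := by
            refine ⟨a', ?_, ?_⟩
            · rw [← hcl]
            · rw [← hcl]
          exact absurd hf (by rw [ffn_pos ξ hex]; simp)
        rw [this]
        simp
      · have hcp := ffn_some_spec ξ hf
        have hcF : c ∈ Finset.univ.filter
            (fun a' : A => ξ.arcMap a' = p.1 ∧ G.t a' = p.2) :=
          Finset.mem_filter.mpr ⟨Finset.mem_univ _, hcp⟩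
        have heq : R.filter (fun a' => (ξ.arcMap a', G.t a') = p) =
            (Finset.univ.filter
              (fun a' : A => ξ.arcMap a' = p.1 ∧ G.t a' = p.2)).erase c := by
          ext a'
          simp only [hR, Finset.mem_filter, Finset.mem_erase, Finset.mem_univ, true_and]
          constructor
          · rintro ⟨hnot, hcl⟩
            rw [Prod.ext_iff] at hcl
            refine ⟨?_, hcl.1, hcl.2⟩
            rintro rfl
            exact hnot (by rw [Prod.ext hcl.1 hcl.2]; exact hf)
          · rintro ⟨hne, h1, h2⟩
            refine ⟨?_, by rw [Prod.ext_iff]; exact ⟨h1, h2⟩⟩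
            intro habs
            rw [(Prod.ext h1 h2 : (ξ.arcMap a', G.t a') = p), hf] at habs
            exact hne (Option.some.inj habs).symm
        rw [heq, Finset.card_erase_of_mem hcF]
        rfl
    have hcardP : P.card = ∑ p ∈ T, (if kkn ξ p = 0 then 1 else 0) := by
      rw [hP, Finset.card_filter]
      exact Finset.sum_congr rfl fun p _ => by simp [kkn_eq_zero_iff]
    have E1 : Set.range (Sum.inl : A → AmbArc A A' N) \ Sgood ξ xs
        = Sum.inl '' (↑R : Set A) := by
      ext u
      constructor
      · rintro ⟨⟨a', rfl⟩, hnot⟩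
        refine ⟨a', ?_, rfl⟩
        rw [Finset.mem_coe, hR, Finset.mem_filter]
        exact ⟨Finset.mem_univ _, fun h => hnot ((mem_Sgood_inl ξ xs a').mpr h)⟩
      · rintro ⟨a', ha', rfl⟩
        rw [Finset.mem_coe, hR, Finset.mem_filter] at ha'
        exact ⟨⟨a', rfl⟩, fun hmem => ha'.2 ((mem_Sgood_inl ξ xs a').mp hmem)⟩
    have E2 : Sgood ξ xs \ Set.range (Sum.inl : A → AmbArc A A' N)
        = (fun p : A' × N => (Sum.inr (p.1, xs p.1, p.2, 0) : AmbArc A A' N)) '' ↑P := by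
      ext u
      constructor
      · rintro ⟨hS, hnr⟩
        match u with
        | Sum.inl a' => exact absurd ⟨a', rfl⟩ hnr
        | Sum.inr (a, x, y, i) =>
          obtain ⟨hx, hi, hy, hfn⟩ := (mem_Sgood_inr ξ xs a x y i).mp hS
          subst hx; subst hi
          refine ⟨(a, y), ?_, rfl⟩
          rw [Finset.mem_coe, hP, Finset.mem_filter]
          exact ⟨Finset.mem_filter.mpr ⟨Finset.mem_univ _, hy⟩, hfn⟩
      · rintro ⟨p, hp, rfl⟩
        rw [Finset.mem_coe, hP, Finset.mem_filter, hT, Finset.mem_filter] at hp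
        refine ⟨(mem_Sgood_inr ξ xs p.1 (xs p.1) p.2 0).mpr
          ⟨rfl, rfl, hp.1.2, hp.2⟩, ?_⟩
        rintro ⟨a', habs⟩
        exact Sum.inl_ne_inr habs
    have hginj : Function.Injective
        (fun p : A' × N => (Sum.inr (p.1, xs p.1, p.2, 0) : AmbArc A A' N)) := by
      intro p q h
      simp only [Sum.inr.injEq, Prod.mk.injEq] at h
      exact Prod.ext h.1 h.2.2.1
    have hdisj : Disjoint (Sum.inl '' (↑R : Set A))
        ((fun p : A' × N => (Sum.inr (p.1, xs p.1, p.2, 0) : AmbArc A A' N)) '' ↑P) := by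
      rw [Set.disjoint_left]
      rintro u ⟨a', -, rfl⟩ ⟨p, -, habs⟩
      exact Sum.inr_ne_inl habs
    rw [E1]
    erw [E2]
    rw [Set.ncard_union_eq hdisj ((R.finite_toSet).image _) ((P.finite_toSet).image _),
      Set.ncard_image_of_injective _ Sum.inl_injective,
      Set.ncard_image_of_injective _ hginj,
      Set.ncard_coe_finset, Set.ncard_coe_finset,
      hval, Int.toNat_natCast, hcardR, hcardP, ← Finset.sum_add_distrib]
  -- optimality
  · intro S'' hS''fin ζ hagree hhom hfib
    have hDfin : ((Set.range (Sum.inl : A → AmbArc A A' N) \ S'')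
        ∪ (S'' \ Set.range (Sum.inl : A → AmbArc A A' N))).Finite :=
      ((Set.finite_range _).diff).union (hS''fin.diff)
    rw [Set.ncard_eq_toFinset_card _ hDfin, hval, Int.toNat_natCast]
    set D₂ := hDfin.toFinset with hD₂
    set cF : AmbArc A A' N → A' × N := fun u => match u with
      | .inl a' => (ξ.arcMap a', G.t a')
      | .inr (a, x, y, i) => (ζ (Sum.inr (a, x, y, i)), y)
      with hcF
    have perclass : ∀ p ∈ T,
        ((kkn ξ p - 1) + if kkn ξ p = 0 then 1 else 0)
          ≤ (D₂.filter fun u => cF u = p).card := by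
      rintro ⟨pa, py⟩ hp
      have hcondp : ξ.nodeMap py = B.t pa := (Finset.mem_filter.mp hp).2
      obtain ⟨u₀, ⟨hu₀S, hu₀ζ, hu₀t⟩, huniq⟩ := hfib pa py hcondp
      by_cases hk : kkn ξ (pa, py) = 0
      · rw [hk, if_pos rfl]
        have hnex : ¬ ∃ a' : A, ξ.arcMap a' = pa ∧ G.t a' = py := by
          have := (kkn_eq_zero_iff ξ (pa, py)).mp hk
          exact (ffn_eq_none_iff ξ (pa, py)).mp this
        match u₀, hu₀S, hu₀ζ, hu₀t, huniq with
        | Sum.inl a', hu₀S, hu₀ζ, hu₀t, _ =>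
          exact absurd ⟨a', (hagree a' hu₀S).symm.trans hu₀ζ, hu₀t⟩ hnex
        | Sum.inr (a0, x0, y0, i0), hu₀S, hu₀ζ, hu₀t, _ =>
          refine Finset.card_pos.mpr ⟨Sum.inr (a0, x0, y0, i0), Finset.mem_filter.mpr ⟨?_, ?_⟩⟩
          · rw [hD₂]; apply (Set.Finite.mem_toFinset hDfin).mpr
            exact Or.inr ⟨hu₀S, by rintro ⟨a', habs⟩; exact Sum.inl_ne_inr habs⟩
          · show (ζ (Sum.inr (a0, x0, y0, i0)), y0) = (pa, py)
            exact Prod.ext hu₀ζ hu₀t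
      · rw [if_neg hk, Nat.add_zero]
        have key : ∀ a' ∈ Finset.univ.filter
            (fun a' : A => ξ.arcMap a' = pa ∧ G.t a' = py),
            Sum.inl a' ∈ S'' → (Sum.inl a' : AmbArc A A' N) = u₀ := by
          intro a' hf' hs'
          obtain ⟨-, h1, h2⟩ := Finset.mem_filter.mp hf'
          exact huniq _ ⟨hs', (hagree a' hs').trans h1, h2⟩
        have hone : ((Finset.univ.filter
            (fun a' : A => ξ.arcMap a' = pa ∧ G.t a' = py)).filter
              (fun a' => Sum.inl a' ∈ S'')).card ≤ 1 := by
          rw [Finset.card_le_one]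
          intro a ha b hb
          obtain ⟨ha1, ha2⟩ := Finset.mem_filter.mp ha
          obtain ⟨hb1, hb2⟩ := Finset.mem_filter.mp hb
          exact Sum.inl_injective ((key a ha1 ha2).trans (key b hb1 hb2).symm)
        have hsplit := Finset.card_filter_add_card_filter_not
          (s := Finset.univ.filter (fun a' : A => ξ.arcMap a' = pa ∧ G.t a' = py))
          (p := fun a' => Sum.inl a' ∈ S'')
        have hmapped : ((Finset.univ.filter
            (fun a' : A => ξ.arcMap a' = pa ∧ G.t a' = py)).filter
              (fun a' => ¬ Sum.inl a' ∈ S'')).card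
            ≤ (D₂.filter fun u => cF u = (pa, py)).card := by
          apply Finset.card_le_card_of_injOn (fun a' => (Sum.inl a' : AmbArc A A' N))
          · intro a' ha'
            obtain ⟨hf', hnot⟩ := Finset.mem_filter.mp ha'
            obtain ⟨-, h1, h2⟩ := Finset.mem_filter.mp hf'
            apply Finset.mem_filter.mpr
            constructor
            · rw [hD₂]; apply (Set.Finite.mem_toFinset hDfin).mpr
              exact Or.inl ⟨⟨a', rfl⟩, hnot⟩
            · show (ξ.arcMap a', G.t a') = (pa, py)
              rw [h1, h2]
          · intro x _ y _ h
            exact Sum.inl_injective h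
        have hkF : kkn ξ (pa, py) = (Finset.univ.filter
            (fun a' : A => ξ.arcMap a' = pa ∧ G.t a' = py)).card := rfl
        omega
    calc ∑ p ∈ T, ((kkn ξ p - 1) + if kkn ξ p = 0 then 1 else 0)
        ≤ ∑ p ∈ T, (D₂.filter fun u => cF u = p).card :=
          Finset.sum_le_sum perclass
      _ = (D₂.filter fun u => cF u ∈ T).card := by
          rw [Finset.card_eq_sum_card_fiberwise
            (f := cF) (s := D₂.filter fun u => cF u ∈ T) (t := T) (fun u hu => (Finset.mem_filter.mp hu).2)]
          apply Finset.sum_congr rfl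
          intro p hp
          congr 1
          ext u
          constructor
          · intro h
            obtain ⟨hu, hcp2⟩ := Finset.mem_filter.mp h
            exact Finset.mem_filter.mpr ⟨Finset.mem_filter.mpr ⟨hu, by rw [hcp2]; exact hp⟩, hcp2⟩
          · intro h
            obtain ⟨h', hcp2⟩ := Finset.mem_filter.mp h
            exact Finset.mem_filter.mpr ⟨(Finset.mem_filter.mp h').1, hcp2⟩
      _ ≤ D₂.card := Finset.card_filter_le _ _
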